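/- Assume in addition that the tangential velocity α satisfies ∂_u α(t,u) = g(t,u)·( κ(t,u) β(t,u) − ⟨κβ⟩(t) ) for all (t,u) (i.e. ∂_s α = κβ − ⟨κβ⟩). Then the relative local length is preserved: g(t,u)/L(t) = g(0,u)/L(0) for every t ≥ 0 and every u. -/

import Mathlib

open Real MeasureTheory Function RealInnerProductSpace

local notation "E3" => EuclideanSpace ℝ (Fin 3)

/-- Context: an evolving family of closed space curves `Γ_t` parameterized by `X t u`,
with local length `g = ‖∂_u X‖ > 0`, unit tangent `T = g⁻¹ • ∂_u X`, Frenet-type frame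
`(T, N, B)`, curvature `κ` (with `∂_u T = g κ N`), evolving by
`∂_t X = β N + γ B + α T`, and total length `L t = ∫₀¹ g t u du`. -/
theorem uniform_redistribution_preserves_relative_local_length
    (X Xu : ℝ → ℝ → E3)
    (g κ α αu β γ : ℝ → ℝ → ℝ)
    (T N B : ℝ → ℝ → E3)
    (L : ℝ → ℝ)
    (hX2 : ContDiff ℝ 2 (uncurry X))
    (hXper : ∀ t u, X t (u + 1) = X t u)
    (hXu : ∀ t u, HasDerivAt (fun w => X t w) (Xu t u) u)
    (hg : ∀ t u, g t u = ‖Xu t u‖)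
    (hgpos : ∀ t u, 0 < g t u)
    (hT : ∀ t u, T t u = (g t u)⁻¹ • Xu t u)
    (hN1 : ContDiff ℝ 1 (uncurry N))
    (hB1 : ContDiff ℝ 1 (uncurry B))
    (hNper : ∀ t u, N t (u + 1) = N t u)
    (hBper : ∀ t u, B t (u + 1) = B t u)
    (hNnorm : ∀ t u, ‖N t u‖ = 1)
    (hBnorm : ∀ t u, ‖B t u‖ = 1)
    (hTN : ∀ t u, ⟪T t u, N t u⟫ = 0)
    (hTB : ∀ t u, ⟪T t u, B t u⟫ = 0)
    (hNB : ∀ t u, ⟪N t u, B t u⟫ = 0)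
    (hκc : Continuous (uncurry κ))
    (hFrenet : ∀ t u, HasDerivAt (fun w => T t w) ((g t u * κ t u) • N t u) u)
    (hα1 : ContDiff ℝ 1 (uncurry α))
    (hβ1 : ContDiff ℝ 1 (uncurry β))
    (hγ1 : ContDiff ℝ 1 (uncurry γ))
    (hαper : ∀ t u, α t (u + 1) = α t u)
    (hβper : ∀ t u, β t (u + 1) = β t u)
    (hγper : ∀ t u, γ t (u + 1) = γ t u)
    (hαu : ∀ t u, HasDerivAt (fun w => α t w) (αu t u) u)
    (hevol : ∀ t u, HasDerivAt (fun s => X s u)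
      (β t u • N t u + γ t u • B t u + α t u • T t u) t)
    (hL : ∀ t, L t = ∫ u in (0:ℝ)..1, g t u)

    (hαeq : ∀ t u, αu t u = g t u * (κ t u * β t u
      - (L t)⁻¹ * (∫ w in (0:ℝ)..1, κ t w * β t w * g t w))) :
    ∀ t : ℝ, 0 ≤ t → ∀ u : ℝ, g t u / L t = g 0 u / L 0 := by
  classical
  have hXdiff : Differentiable ℝ (uncurry X) := hX2.differentiable two_ne_zero
  set D : ℝ × ℝ → (ℝ × ℝ) →L[ℝ] E3 := fderiv ℝ (uncurry X) with hDdef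
  have hD1 : ContDiff ℝ 1 D := hX2.fderiv_right (by norm_num)
  have hcu : ∀ t u : ℝ, HasDerivAt (fun w => ((t, w) : ℝ × ℝ)) ((0, 1) : ℝ × ℝ) u :=
    fun t u => (hasDerivAt_const u t).prodMk (hasDerivAt_id u)
  have hct : ∀ t u : ℝ, HasDerivAt (fun s => ((s, u) : ℝ × ℝ)) ((1, 0) : ℝ × ℝ) t :=
    fun t u => (hasDerivAt_id t).prodMk (hasDerivAt_const t u)
  have hXuD : ∀ t u, Xu t u = D (t, u) ((0 : ℝ), (1 : ℝ)) := by
    intro t u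
    refine (hXu t u).unique ?_
    have h := ((hXdiff (t, u)).hasFDerivAt).comp_hasDerivAt u (hcu t u)
    simpa [Function.comp_def, Function.uncurry] using h
  -- partial derivatives in u of N, B, β, γ
  have hNdiff : Differentiable ℝ (uncurry N) := hN1.differentiable one_ne_zero
  have hBdiff : Differentiable ℝ (uncurry B) := hB1.differentiable one_ne_zero
  have hβdiff : Differentiable ℝ (uncurry β) := hβ1.differentiable one_ne_zero
  have hγdiff : Differentiable ℝ (uncurry γ) := hγ1.differentiable one_ne_zero
  have hαdiff : Differentiable ℝ (uncurry α) := hα1.differentiable one_ne_zero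
  set Nu : ℝ → ℝ → E3 := fun t u => fderiv ℝ (uncurry N) (t, u) ((0:ℝ), (1:ℝ)) with hNudef
  set Bu : ℝ → ℝ → E3 := fun t u => fderiv ℝ (uncurry B) (t, u) ((0:ℝ), (1:ℝ)) with hBudef
  set βu : ℝ → ℝ → ℝ := fun t u => fderiv ℝ (uncurry β) (t, u) ((0:ℝ), (1:ℝ)) with hβudef
  set γu : ℝ → ℝ → ℝ := fun t u => fderiv ℝ (uncurry γ) (t, u) ((0:ℝ), (1:ℝ)) with hγudef
  have hNu : ∀ t u, HasDerivAt (fun w => N t w) (Nu t u) u := by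
    intro t u
    have h := ((hNdiff (t, u)).hasFDerivAt).comp_hasDerivAt u (hcu t u)
    simpa [Function.comp_def, Function.uncurry] using h
  have hBu : ∀ t u, HasDerivAt (fun w => B t w) (Bu t u) u := by
    intro t u
    have h := ((hBdiff (t, u)).hasFDerivAt).comp_hasDerivAt u (hcu t u)
    simpa [Function.comp_def, Function.uncurry] using h
  have hβu : ∀ t u, HasDerivAt (fun w => β t w) (βu t u) u := by
    intro t u
    have h := ((hβdiff (t, u)).hasFDerivAt).comp_hasDerivAt u (hcu t u)
    simpa [Function.comp_def, Function.uncurry] using h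
  have hγu : ∀ t u, HasDerivAt (fun w => γ t w) (γu t u) u := by
    intro t u
    have h := ((hγdiff (t, u)).hasFDerivAt).comp_hasDerivAt u (hcu t u)
    simpa [Function.comp_def, Function.uncurry] using h
  -- joint continuity identification of αu
  have hαuD : ∀ t u, αu t u = fderiv ℝ (uncurry α) (t, u) ((0:ℝ), (1:ℝ)) := by
    intro t u
    refine (hαu t u).unique ?_
    have h := ((hαdiff (t, u)).hasFDerivAt).comp_hasDerivAt u (hcu t u)
    simpa [Function.comp_def, Function.uncurry] using h
  -- mixed partials symmetry
  have hDdiff : Differentiable ℝ D := hD1.differentiable one_ne_zero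
  have hsymm : ∀ p : ℝ × ℝ, fderiv ℝ D p (1, 0) (0, 1) = fderiv ℝ D p (0, 1) (1, 0) :=
    fun p => second_derivative_symmetric (fun q => (hXdiff q).hasFDerivAt)
      ((hDdiff p).hasFDerivAt) _ _
  -- t-derivative of Xu is the u-derivative of the velocity
  have hXt_u : ∀ t u, HasDerivAt (fun s => Xu s u) (fderiv ℝ D (t, u) (0, 1) (1, 0)) t := by
    intro t u
    have h1 : HasDerivAt (fun s => D (s, u)) (fderiv ℝ D (t, u) ((1:ℝ), (0:ℝ))) t := by
      have h := ((hDdiff (t, u)).hasFDerivAt).comp_hasDerivAt t (hct t u)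
      simpa [Function.comp_def] using h
    have h2 := h1.clm_apply (hasDerivAt_const t (((0:ℝ), (1:ℝ)) : ℝ × ℝ))
    simp only [map_zero, add_zero] at h2
    have heq : (fun s => Xu s u) = fun s => D (s, u) ((0:ℝ), (1:ℝ)) :=
      funext fun s => hXuD s u
    rw [heq, ← hsymm (t, u)]
    exact h2
  -- u-derivative of the velocity V
  have hVD : ∀ t u, β t u • N t u + γ t u • B t u + α t u • T t u
      = D (t, u) ((1:ℝ), (0:ℝ)) := by
    intro t u
    refine (hevol t u).unique ?_
    have h := ((hXdiff (t, u)).hasFDerivAt).comp_hasDerivAt t (hct t u)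
    simpa [Function.comp_def, Function.uncurry] using h
  have hVu_D : ∀ t u, HasDerivAt (fun w => D (t, w) ((1:ℝ), (0:ℝ)))
      (fderiv ℝ D (t, u) (0, 1) (1, 0)) u := by
    intro t u
    have h1 : HasDerivAt (fun w => D (t, w)) (fderiv ℝ D (t, u) ((0:ℝ), (1:ℝ))) u := by
      have h := ((hDdiff (t, u)).hasFDerivAt).comp_hasDerivAt u (hcu t u)
      simpa [Function.comp_def] using h
    have h2 := h1.clm_apply (hasDerivAt_const u (((1:ℝ), (0:ℝ)) : ℝ × ℝ))
    simpa only [map_zero, add_zero] using h2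
  -- explicit product-rule derivative of V in u
  have hVu : ∀ t u, HasDerivAt (fun w => β t w • N t w + γ t w • B t w + α t w • T t w)
      (β t u • Nu t u + βu t u • N t u + (γ t u • Bu t u + γu t u • B t u)
        + (α t u • ((g t u * κ t u) • N t u) + αu t u • T t u)) u := by
    intro t u
    exact (((hβu t u).smul (hNu t u)).add ((hγu t u).smul (hBu t u))).add
      ((hαu t u).smul (hFrenet t u))
  -- hence (denote Vu the explicit expression), d/dt Xu = Vu
  have hMix : ∀ t u, HasDerivAt (fun s => Xu s u)
      (β t u • Nu t u + βu t u • N t u + (γ t u • Bu t u + γu t u • B t u)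
        + (α t u • ((g t u * κ t u) • N t u) + αu t u • T t u)) t := by
    intro t u
    have h1 : fderiv ℝ D (t, u) (0, 1) (1, 0)
        = β t u • Nu t u + βu t u • N t u + (γ t u • Bu t u + γu t u • B t u)
          + (α t u • ((g t u * κ t u) • N t u) + αu t u • T t u) := by
      have h2 : (fun w => β t w • N t w + γ t w • B t w + α t w • T t w)
          = fun w => D (t, w) ((1:ℝ), (0:ℝ)) := funext fun w => hVD t w
      have h3 := hVu t u
      rw [h2] at h3
      exact (h3.unique (hVu_D t u)).symm
    rw [← h1]; exact hXt_u t u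
  -- inner product identities
  have hTT : ∀ t u, ⟪T t u, T t u⟫ = 1 := by
    intro t u
    have hno : ‖T t u‖ = 1 := by
      rw [hT, norm_smul, ← hg, Real.norm_eq_abs, abs_inv, abs_of_pos (hgpos t u),
        inv_mul_cancel₀ (ne_of_gt (hgpos t u))]
    rw [real_inner_self_eq_norm_mul_norm, hno, one_mul]
  have hNN : ∀ t u, ⟪N t u, N t u⟫ = 1 := by
    intro t u; rw [real_inner_self_eq_norm_mul_norm, hNnorm, one_mul]
  have hNuT : ∀ t u, ⟪Nu t u, T t u⟫ = -(g t u * κ t u) := by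
    intro t u
    have h0 := (hNu t u).inner ℝ (hFrenet t u)
    have h1 : (fun w => ⟪N t w, T t w⟫) = fun _ => (0:ℝ) :=
      funext fun w => by rw [real_inner_comm]; exact hTN t w
    rw [h1] at h0
    have h2 := h0.unique (hasDerivAt_const u (0:ℝ))
    have h3 : ⟪N t u, (g t u * κ t u) • N t u⟫ = g t u * κ t u := by
      rw [real_inner_smul_right, hNN t u, mul_one]
    rw [h3] at h2
    linarith [h2]
  have hBuT : ∀ t u, ⟪Bu t u, T t u⟫ = 0 := by
    intro t u
    have h0 := (hBu t u).inner ℝ (hFrenet t u)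
    have h1 : (fun w => ⟪B t w, T t w⟫) = fun _ => (0:ℝ) :=
      funext fun w => by rw [real_inner_comm]; exact hTB t w
    rw [h1] at h0
    have h2 := h0.unique (hasDerivAt_const u (0:ℝ))
    have h3 : ⟪B t u, (g t u * κ t u) • N t u⟫ = 0 := by
      rw [real_inner_smul_right, real_inner_comm, hNB t u, mul_zero]
    rw [h3] at h2
    linarith [h2]
  -- the time derivative of g
  have hgt : ∀ t u, HasDerivAt (fun s => g s u) (αu t u - g t u * κ t u * β t u) t := by
    intro t u
    have hX_t := hMix t u
    have hinner := hX_t.inner ℝ hX_t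
    have hpos : (0:ℝ) < ⟪Xu t u, Xu t u⟫ := by
      rw [real_inner_self_eq_norm_mul_norm]
      have : 0 < ‖Xu t u‖ := by rw [← hg]; exact hgpos t u
      positivity
    have hsqrt := (Real.hasDerivAt_sqrt (ne_of_gt hpos)).comp t hinner
    have heq : (Real.sqrt ∘ fun s => ⟪Xu s u, Xu s u⟫) = fun s => g s u := by
      funext s
      simp only [Function.comp]
      rw [real_inner_self_eq_norm_mul_norm, Real.sqrt_mul_self (norm_nonneg _), ← hg]
    rw [heq] at hsqrt
    refine hsqrt.congr_deriv ?_
    -- compute the derivative value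
    have hXuT : Xu t u = g t u • T t u := by
      rw [hT, smul_smul, mul_inv_cancel₀ (ne_of_gt (hgpos t u)), one_smul]
    have hsq : Real.sqrt ⟪Xu t u, Xu t u⟫ = g t u := by
      rw [real_inner_self_eq_norm_mul_norm, Real.sqrt_mul_self (norm_nonneg _), ← hg]
    set Vu := β t u • Nu t u + βu t u • N t u + (γ t u • Bu t u + γu t u • B t u)
        + (α t u • ((g t u * κ t u) • N t u) + αu t u • T t u) with hVudef
    have hVuT : ⟪Vu, T t u⟫ = αu t u - g t u * κ t u * β t u := by
      rw [hVudef]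
      simp only [inner_add_left, real_inner_smul_left]
      rw [hNuT t u, hBuT t u, hTT t u]
      have h1 : ⟪N t u, T t u⟫ = 0 := by rw [real_inner_comm]; exact hTN t u
      have h2 : ⟪B t u, T t u⟫ = 0 := by rw [real_inner_comm]; exact hTB t u
      rw [h1, h2]
      ring
    have hXuVu : ⟪Xu t u, Vu⟫ = g t u * (αu t u - g t u * κ t u * β t u) := by
      rw [hXuT, real_inner_smul_left, real_inner_comm, hVuT]
    have hVuXu : ⟪Vu, Xu t u⟫ = g t u * (αu t u - g t u * κ t u * β t u) := by
      rw [real_inner_comm]; exact hXuVu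
    rw [hXuVu, hVuXu, hsq]
    have hgne : g t u ≠ 0 := ne_of_gt (hgpos t u)
    field_simp
    ring
  -- joint continuity facts
  have hgD : ∀ t u, g t u = ‖D (t, u) ((0:ℝ), (1:ℝ))‖ := by
    intro t u; rw [hg, hXuD]
  have hgcont2 : Continuous fun p : ℝ × ℝ => g p.1 p.2 := by
    have h1 : Continuous fun p : ℝ × ℝ => ‖D p ((0:ℝ), (1:ℝ))‖ :=
      (hD1.continuous.clm_apply continuous_const).norm
    exact h1.congr fun p => by rw [← hgD]
  have hαucont2 : Continuous fun p : ℝ × ℝ => αu p.1 p.2 := by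
    have h1 : Continuous fun p : ℝ × ℝ => fderiv ℝ (uncurry α) p ((0:ℝ), (1:ℝ)) :=
      ((hα1.continuous_fderiv one_ne_zero).clm_apply continuous_const)
    exact h1.congr fun p => (hαuD p.1 p.2).symm
  have hκc2 : Continuous fun p : ℝ × ℝ => κ p.1 p.2 := by exact hκc
  have hβc2 : Continuous fun p : ℝ × ℝ => β p.1 p.2 := by exact hβ1.continuous
  have hgtcont : Continuous fun p : ℝ × ℝ =>
      αu p.1 p.2 - g p.1 p.2 * κ p.1 p.2 * β p.1 p.2 :=
    hαucont2.sub ((hgcont2.mul hκc2).mul hβc2)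
  -- slice continuity
  have hgcontu : ∀ s : ℝ, Continuous fun v => g s v := fun s =>
    hgcont2.comp (Continuous.prodMk_right s)
  have hαucontu : ∀ s : ℝ, Continuous fun v => αu s v := fun s =>
    hαucont2.comp (Continuous.prodMk_right s)
  have hgkβcontu : ∀ s : ℝ, Continuous fun v => g s v * κ s v * β s v := fun s =>
    ((hgcont2.mul hκc2).mul hβc2).comp (Continuous.prodMk_right s)
  have hκβgcontu : ∀ s : ℝ, Continuous fun v => κ s v * β s v * g s v := fun s =>
    ((hκc2.mul hβc2).mul hgcont2).comp (Continuous.prodMk_right s)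
  -- positivity of L
  have hLpos : ∀ s : ℝ, 0 < L s := by
    intro s
    rw [hL]
    exact intervalIntegral.intervalIntegral_pos_of_pos_on
      ((hgcontu s).intervalIntegrable 0 1) (fun x _ => hgpos s x) one_pos
  -- derivative of L
  have hLderiv : ∀ s : ℝ, HasDerivAt L (-(∫ w in (0:ℝ)..1, κ s w * β s w * g s w)) s := by
    intro s
    obtain ⟨M, hM⟩ := ((isCompact_Icc (a := s - 1) (b := s + 1)).prod
      (isCompact_Icc (a := (0:ℝ)) (b := 1))).exists_bound_of_continuousOn
      hgtcont.continuousOn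
    have hball : ∀ x ∈ Metric.ball s 1, x ∈ Set.Icc (s - 1) (s + 1) := by
      intro x hx
      have := Metric.mem_ball.mp hx
      rw [Real.dist_eq] at this
      constructor <;> [linarith [abs_lt.mp this]; linarith [abs_lt.mp this]]
    have hIoc : ∀ v : ℝ, v ∈ Set.uIoc (0:ℝ) 1 → v ∈ Set.Icc (0:ℝ) 1 := by
      intro v hv
      rw [Set.uIoc_of_le (by norm_num : (0:ℝ) ≤ 1)] at hv
      exact ⟨le_of_lt hv.1, hv.2⟩
    have key := intervalIntegral.hasDerivAt_integral_of_dominated_loc_of_deriv_le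
      (F := fun x v => g x v) (F' := fun x v => αu x v - g x v * κ x v * β x v)
      (x₀ := s) (a := (0:ℝ)) (b := 1) (bound := fun _ => M) (μ := volume) (Metric.ball_mem_nhds s one_pos)
      (Filter.Eventually.of_forall fun x => (hgcontu x).aestronglyMeasurable)
      ((hgcontu s).intervalIntegrable 0 1)
      (((hαucontu s).sub (hgkβcontu s)).aestronglyMeasurable)
      (MeasureTheory.ae_of_all _ fun v hv x hx => hM ((x, v)) ⟨hball x hx, hIoc v hv⟩)
      intervalIntegrable_const
      (MeasureTheory.ae_of_all _ fun v _ x _ => hgt x v)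
    have hLfun : L = fun x => ∫ v in (0:ℝ)..1, g x v := funext hL
    rw [hLfun]
    refine key.2.congr_deriv ?_
    have hαuint : IntervalIntegrable (fun v => αu s v) volume 0 1 :=
      (hαucontu s).intervalIntegrable 0 1
    have hgkβint : IntervalIntegrable (fun v => g s v * κ s v * β s v) volume 0 1 :=
      (hgkβcontu s).intervalIntegrable 0 1
    have hsplit : (∫ v in (0:ℝ)..1, (αu s v - g s v * κ s v * β s v))
        = (∫ v in (0:ℝ)..1, αu s v) - ∫ v in (0:ℝ)..1, g s v * κ s v * β s v :=
      intervalIntegral.integral_sub hαuint hgkβint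
    have hFTC : (∫ v in (0:ℝ)..1, αu s v) = α s 1 - α s 0 :=
      intervalIntegral.integral_eq_sub_of_hasDerivAt (fun v _ => hαu s v) hαuint
    have hper : α s 1 = α s 0 := by simpa using hαper s 0
    have hswap : (∫ v in (0:ℝ)..1, g s v * κ s v * β s v)
        = ∫ w in (0:ℝ)..1, κ s w * β s w * g s w := by
      apply intervalIntegral.integral_congr
      intro v _
      ring
    rw [hsplit, hFTC, hper, hswap]
    ring
  -- conclusion
  intro t ht u
  have hfd : ∀ s : ℝ, HasDerivAt (fun r => g r u / L r) 0 s := by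
    intro s
    have h1 := (hgt s u).div (hLderiv s) (ne_of_gt (hLpos s))
    refine h1.congr_deriv ?_
    rw [hαeq s u]
    have hLne : L s ≠ 0 := ne_of_gt (hLpos s)
    field_simp
    ring
  exact is_const_of_deriv_eq_zero (f := fun r => g r u / L r)
    (fun s => (hfd s).differentiableAt) (fun s => (hfd s).deriv) t 0
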